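/- Let X, Y ∈ ℤ^{n×n} be symmetric, ζ, η ∈ ℤⁿ, and let Q be a rational orthogonal matrix with Q X Qᵀ = Y and Q ζ = η, of level ℓ. Let p be a prime with p ∣ ℓ and rank_p(W_{X,ζ}) = n−1. Then there exists t₀ ∈ ℤ such that the polynomial det(λI − X − t₀·ζζᵀ) ∈ ℤ[λ], reduced modulo p, has exactly one root in 𝔽_p. -/

import Mathlib

set_option linter.unusedSectionVars false

open Matrix Polynomial

section AuxLemmas

variable {n : ℕ} {F : Type*} [Field F] [DecidableEq F]

private lemma pow_mulVec_eigen (A : Matrix (Fin n) (Fin n) F) (u : Fin n → F) (β : F)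
    (h : A *ᵥ u = β • u) (k : ℕ) : (A ^ k) *ᵥ u = β ^ k • u := by
  induction k with
  | zero => simp
  | succ k ih =>
      rw [pow_succ, ← Matrix.mulVec_mulVec, h, Matrix.mulVec_smul, ih, smul_smul, pow_succ,
        mul_comm]

private lemma aeval_mulVec_eigen (A : Matrix (Fin n) (Fin n) F) (u : Fin n → F) (β : F)
    (h : A *ᵥ u = β • u) (f : F[X]) : (aeval A f) *ᵥ u = f.eval β • u := by
  induction f using Polynomial.induction_on' with
  | add p q hp hq => rw [map_add, Matrix.add_mulVec, hp, hq, eval_add, add_smul]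
  | monomial k a =>
      rw [aeval_monomial, eval_monomial, Algebra.algebraMap_eq_smul_one, smul_mul_assoc,
        one_mul, Matrix.smul_mulVec, pow_mulVec_eigen A u β h k, smul_smul]

private lemma aeval_transpose (A : Matrix (Fin n) (Fin n) F) (hA : Aᵀ = A) (f : F[X]) :
    (aeval A f)ᵀ = aeval A f := by
  induction f using Polynomial.induction_on' with
  | add p q hp hq => rw [map_add, Matrix.transpose_add, hp, hq]
  | monomial k a =>
      rw [aeval_monomial, Algebra.algebraMap_eq_smul_one, smul_mul_assoc, one_mul,
        Matrix.transpose_smul, Matrix.transpose_pow, hA]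

private lemma dot_aeval_eigen (A : Matrix (Fin n) (Fin n) F) (hA : Aᵀ = A) (u b : Fin n → F)
    (β : F) (h : A *ᵥ u = β • u) (f : F[X]) :
    u ⬝ᵥ ((aeval A f) *ᵥ b) = f.eval β * (u ⬝ᵥ b) := by
  rw [Matrix.dotProduct_mulVec, ← Matrix.mulVec_transpose, aeval_transpose A hA,
    aeval_mulVec_eigen A u β h, smul_dotProduct, smul_eq_mul]

private lemma sum_mulVec {ι : Type*} (s : Finset ι) (M : ι → Matrix (Fin n) (Fin n) F)
    (b : Fin n → F) : (∑ i ∈ s, M i) *ᵥ b = ∑ i ∈ s, (M i *ᵥ b) := by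
  induction s using Finset.cons_induction with
  | empty => simp
  | cons i s hi ih => simp [Finset.sum_cons, Matrix.add_mulVec, ih]

private lemma dot_sum {ι : Type*} (s : Finset ι) (v : Fin n → F) (w : ι → Fin n → F) :
    v ⬝ᵥ (∑ i ∈ s, w i) = ∑ i ∈ s, v ⬝ᵥ w i := by
  induction s using Finset.cons_induction with
  | empty => simp
  | cons i s hi ih => simp [Finset.sum_cons, dotProduct_add, ih]

private lemma dot_aeval_all (hn : 0 < n) (A : Matrix (Fin n) (Fin n) F) (v b : Fin n → F)
    (h : ∀ j : Fin n, v ⬝ᵥ ((A ^ (j : ℕ)) *ᵥ b) = 0) (f : F[X]) :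
    v ⬝ᵥ ((aeval A f) *ᵥ b) = 0 := by
  have hmod : aeval A f = aeval A (f %ₘ A.charpoly) := by
    conv_lhs => rw [← Polynomial.modByMonic_add_div f A.charpoly]
    rw [map_add, _root_.map_mul, Matrix.aeval_self_charpoly, zero_mul, add_zero]
  have hdeg : (f %ₘ A.charpoly).natDegree < n := by
    rcases eq_or_ne (f %ₘ A.charpoly) 0 with h0 | h0
    · simpa [h0] using hn
    · rw [Polynomial.natDegree_lt_iff_degree_lt h0]
      have := Polynomial.degree_modByMonic_lt f A.charpoly_monic
      rwa [Matrix.charpoly_degree_eq_dim, Fintype.card_fin] at this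
  rw [hmod, Polynomial.aeval_eq_sum_range' hdeg]
  rw [_root_.sum_mulVec, dot_sum]
  refine Finset.sum_eq_zero fun i hi => ?_
  rw [Matrix.smul_mulVec, dotProduct_smul, h ⟨i, Finset.mem_range.mp hi⟩, smul_zero]

private lemma eval_charpoly' {R : Type*} [CommRing R] (M : Matrix (Fin n) (Fin n) R) (lam : R) :
    M.charpoly.eval lam = (lam • (1 : Matrix (Fin n) (Fin n) R) - M).det := by
  rw [Matrix.charpoly, ← Polynomial.coe_evalRingHom, RingHom.map_det]
  congr 1
  ext i j
  by_cases h : i = j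
  · subst h
    simp [Matrix.charmatrix_apply_eq, Matrix.one_apply_eq]
  · simp [Matrix.charmatrix_apply_ne _ _ _ h, Matrix.one_apply_ne h]


private lemma bbT_mulVec (b x : Fin n → F) (t : F) :
    (t • vecMulVec b b) *ᵥ x = (t * (b ⬝ᵥ x)) • b := by
  funext i
  simp only [Matrix.mulVec, dotProduct, Matrix.smul_apply, Matrix.vecMulVec_apply,
    smul_eq_mul, Pi.smul_apply]
  rw [Finset.mul_sum, Finset.sum_mul]
  exact Finset.sum_congr rfl fun j _ => by ring

private lemma shifted_mulVec (A : Matrix (Fin n) (Fin n) F) (b x : Fin n → F) (t β : F) :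
    (β • (1 : Matrix (Fin n) (Fin n) F) - (A + t • vecMulVec b b)) *ᵥ x
      = β • x - (A *ᵥ x + (t * (b ⬝ᵥ x)) • b) := by
  rw [Matrix.sub_mulVec, Matrix.add_mulVec, Matrix.smul_mulVec, Matrix.one_mulVec,
    bbT_mulVec]

private lemma key {F : Type*} [Field F] [Fintype F] [DecidableEq F] {n : ℕ}
    (A : Matrix (Fin n) (Fin n) F) (hA : Aᵀ = A) (b v : Fin n → F) (μ : F)
    (hvne : v ≠ 0)
    (hAv : A *ᵥ v = μ • v)
    (hvb : ∀ f : F[X], v ⬝ᵥ ((aeval A f) *ᵥ b) = 0)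
    (hker : ∀ u : Fin n → F, (∀ f : F[X], u ⬝ᵥ ((aeval A f) *ᵥ b) = 0) → ∃ c : F, u = c • v)
    (hrange : ∀ z : Fin n → F, v ⬝ᵥ z = 0 → ∃ f : F[X], z = (aeval A f) *ᵥ b) :
    ∃ t : F, ∀ β : F,
      ((β • (1 : Matrix (Fin n) (Fin n) F) - (A + t • vecMulVec b b)).det = 0 ↔ β = μ) := by
  classical
  have hvb0 : v ⬝ᵥ b = 0 := by simpa using hvb 1
  have L1 : ∀ β : F, β ≠ μ → ∀ u : Fin n → F, A *ᵥ u = β • u → u ⬝ᵥ b = 0 → u = 0 := by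
    intro β hβ u hu hub
    obtain ⟨c, rfl⟩ := hker u fun f => by
      rw [dot_aeval_eigen A hA u b β hu f, hub, mul_zero]
    have h1 : A *ᵥ (c • v) = (c * μ) • v := by
      rw [Matrix.mulVec_smul, hAv, smul_smul]
    have h2 : ((c * μ) - (β * c)) • v = 0 := by
      rw [sub_smul, ← h1, hu, smul_smul, sub_self]
    rcases smul_eq_zero.mp h2 with hc | hv0
    · have hc0 : c = 0 := by
        rcases mul_eq_zero.mp (show c * (μ - β) = 0 by linear_combination hc) with h | h
        · exact h
        · exact absurd (show β = μ by linear_combination -h) hβ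
      rw [hc0, zero_smul]
    · exact absurd hv0 hvne
  have atMost : ∀ β : F, β ≠ μ → ∀ t₁ t₂ : F,
      (β • (1 : Matrix (Fin n) (Fin n) F) - (A + t₁ • vecMulVec b b)).det = 0 →
      (β • (1 : Matrix (Fin n) (Fin n) F) - (A + t₂ • vecMulVec b b)).det = 0 → t₁ = t₂ := by
    intro β hβ t₁ t₂ hd₁ hd₂
    obtain ⟨x₁, hx₁ne, hx₁⟩ := (Matrix.exists_mulVec_eq_zero_iff).mpr hd₁
    obtain ⟨x₂, hx₂ne, hx₂⟩ := (Matrix.exists_mulVec_eq_zero_iff).mpr hd₂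
    rw [shifted_mulVec, sub_eq_zero] at hx₁ hx₂
    set c₁ := b ⬝ᵥ x₁ with hc₁def
    set c₂ := b ⬝ᵥ x₂ with hc₂def
    have hA₁ : A *ᵥ x₁ = β • x₁ - (t₁ * c₁) • b := by rw [hx₁]; abel
    have hA₂ : A *ᵥ x₂ = β • x₂ - (t₂ * c₂) • b := by rw [hx₂]; abel
    have hc₁ : c₁ ≠ 0 := by
      intro h0
      refine hx₁ne (L1 β hβ x₁ ?_ ?_)
      · rw [hA₁, h0, mul_zero, zero_smul, sub_zero]
      · rw [dotProduct_comm]; exact h0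
    have hc₂ : c₂ ≠ 0 := by
      intro h0
      refine hx₂ne (L1 β hβ x₂ ?_ ?_)
      · rw [hA₂, h0, mul_zero, zero_smul, sub_zero]
      · rw [dotProduct_comm]; exact h0
    by_contra hne
    have hs : t₁ - t₂ ≠ 0 := sub_ne_zero.mpr hne
    set z : Fin n → F := c₁⁻¹ • x₁ - c₂⁻¹ • x₂ with hzdef
    have hbz : b ⬝ᵥ z = 0 := by
      rw [hzdef, dotProduct_sub, dotProduct_smul, dotProduct_smul,
        ← hc₁def, ← hc₂def, smul_eq_mul, smul_eq_mul, inv_mul_cancel₀ hc₁,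
        inv_mul_cancel₀ hc₂, sub_self]
    have hAz : A *ᵥ z = β • z - (t₁ - t₂) • b := by
      rw [hzdef, Matrix.mulVec_sub, Matrix.mulVec_smul, Matrix.mulVec_smul, hA₁, hA₂]
      funext i
      simp only [Pi.sub_apply, Pi.smul_apply, smul_eq_mul]
      field_simp
      ring
    have hvz : v ⬝ᵥ z = 0 := by
      have h1 : v ⬝ᵥ (A *ᵥ z) = μ * (v ⬝ᵥ z) := by
        rw [Matrix.dotProduct_mulVec, ← Matrix.mulVec_transpose, hA, hAv,
          smul_dotProduct, smul_eq_mul]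
      rw [hAz, dotProduct_sub, dotProduct_smul, dotProduct_smul,
        hvb0, smul_eq_mul, smul_eq_mul, mul_zero, sub_zero] at h1
      have h2 : (β - μ) * (v ⬝ᵥ z) = 0 := by linear_combination h1
      exact (mul_eq_zero.mp h2).resolve_left (sub_ne_zero.mpr hβ)
    obtain ⟨f, hf⟩ := hrange z hvz
    have hhb : (aeval A ((C β - Polynomial.X) * f - C (t₁ - t₂))) *ᵥ b = 0 := by
      have heq : aeval A ((C β - Polynomial.X) * f - C (t₁ - t₂))
          = (β • (1 : Matrix (Fin n) (Fin n) F) - A) * aeval A f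
            - (t₁ - t₂) • (1 : Matrix (Fin n) (Fin n) F) := by
        rw [map_sub, _root_.map_mul, map_sub, aeval_C, aeval_X, aeval_C,
          Algebra.algebraMap_eq_smul_one, Algebra.algebraMap_eq_smul_one]
      rw [heq, Matrix.sub_mulVec, ← Matrix.mulVec_mulVec, ← hf, Matrix.smul_mulVec,
        Matrix.one_mulVec, Matrix.sub_mulVec, Matrix.smul_mulVec, Matrix.one_mulVec,
        hAz]
      abel
    have hhβ : ((C β - Polynomial.X) * f - C (t₁ - t₂)).eval β = -(t₁ - t₂) := by
      simp
    have Binj : ∀ u : Fin n → F, A *ᵥ u = β • u → u = 0 := by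
      intro u hu
      rcases eq_or_ne (u ⬝ᵥ b) 0 with h0 | h0
      · exact L1 β hβ u hu h0
      · exfalso
        have hpair := dot_aeval_eigen A hA u b β hu ((C β - Polynomial.X) * f - C (t₁ - t₂))
        rw [hhb, dotProduct_zero, hhβ] at hpair
        exact (mul_ne_zero (neg_ne_zero.mpr hs) h0) hpair.symm
    have hw : A *ᵥ ((t₂ * c₂) • x₁ - (t₁ * c₁) • x₂)
        = β • ((t₂ * c₂) • x₁ - (t₁ * c₁) • x₂) := by
      rw [Matrix.mulVec_sub, Matrix.mulVec_smul, Matrix.mulVec_smul, hA₁, hA₂]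
      funext i
      simp only [Pi.sub_apply, Pi.smul_apply, smul_eq_mul]
      ring
    have hw0 := Binj _ hw
    have hdot : (t₂ * c₂) * c₁ - (t₁ * c₁) * c₂ = 0 := by
      have := congrArg (fun w => b ⬝ᵥ w) hw0
      simpa [dotProduct_sub, dotProduct_smul, ← hc₁def, ← hc₂def,
        smul_eq_mul] using this
    have h2 : c₁ * c₂ * (t₂ - t₁) = 0 := by linear_combination hdot
    rcases mul_eq_zero.mp h2 with h | h
    · rcases mul_eq_zero.mp h with h' | h'
      · exact hc₁ h'
      · exact hc₂ h'
    · exact hne (by linear_combination -h)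
  -- counting
  obtain ⟨t, ht⟩ : ∃ t : F, ∀ β ∈ Finset.univ.erase μ,
      ¬ ((β • (1 : Matrix (Fin n) (Fin n) F) - (A + t • vecMulVec b b)).det = 0) := by
    set T : F → Finset F := fun β => Finset.univ.filter
      (fun t => (β • (1 : Matrix (Fin n) (Fin n) F) - (A + t • vecMulVec b b)).det = 0) with hT
    have hTcard : ∀ β ∈ Finset.univ.erase μ, (T β).card ≤ 1 := by
      intro β hβ
      refine Finset.card_le_one.mpr fun a ha b' hb' => ?_
      exact atMost β (Finset.mem_erase.mp hβ).1 a b' (Finset.mem_filter.mp ha).2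
        (Finset.mem_filter.mp hb').2
    have hbadcard : ((Finset.univ.erase μ).biUnion T).card < Fintype.card F := by
      calc ((Finset.univ.erase μ).biUnion T).card
          ≤ ∑ β ∈ Finset.univ.erase μ, (T β).card := Finset.card_biUnion_le
        _ ≤ ∑ _β ∈ Finset.univ.erase μ, 1 := Finset.sum_le_sum hTcard
        _ = (Finset.univ.erase μ).card := by simp
        _ < Fintype.card F := by
            rw [Finset.card_erase_of_mem (Finset.mem_univ μ), Finset.card_univ]
            have : 0 < Fintype.card F := Fintype.card_pos
            omega
    obtain ⟨t, ht⟩ : ∃ t : F, t ∉ (Finset.univ.erase μ).biUnion T := by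
      by_contra hcon
      push_neg at hcon
      have hsub : (Finset.univ : Finset F) ⊆ (Finset.univ.erase μ).biUnion T :=
        fun t _ => hcon t
      have := Finset.card_le_card hsub
      rw [Finset.card_univ] at this
      omega
    exact ⟨t, fun β hβ hdet =>
      ht (Finset.mem_biUnion.mpr ⟨β, hβ, Finset.mem_filter.mpr ⟨Finset.mem_univ t, hdet⟩⟩)⟩
  refine ⟨t, fun β => ⟨fun hdet => ?_, fun hβ => ?_⟩⟩
  · by_contra hβ
    exact ht β (Finset.mem_erase.mpr ⟨hβ, Finset.mem_univ β⟩) hdet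
  · subst hβ
    apply Matrix.exists_mulVec_eq_zero_iff.mp
    refine ⟨v, hvne, ?_⟩
    rw [shifted_mulVec, hAv, dotProduct_comm b v, hvb0, mul_zero, zero_smul,
      add_zero, sub_self]

end AuxLemmas

/-- The walk matrix `[ζ, Xζ, X²ζ, …, X^{n−1}ζ]`: its `j`-th column is `X^j ζ`. -/
def walkMatrix {n : ℕ} {R : Type*} [CommRing R]
    (X : Matrix (Fin n) (Fin n) R) (ζ : Fin n → R) : Matrix (Fin n) (Fin n) R :=
  Matrix.of fun i j => ((X ^ (j : ℕ)) *ᵥ ζ) i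

/-- `ℓ` is the level of the rational matrix `Q`: the least positive integer such that
`ℓ • Q` has integer entries. -/
def IsLevel {n : ℕ} (Q : Matrix (Fin n) (Fin n) ℚ) (ℓ : ℕ) : Prop :=
  (0 < ℓ ∧ ∀ i j, ∃ z : ℤ, (ℓ : ℚ) * Q i j = (z : ℚ)) ∧
    ∀ m : ℕ, 0 < m → (∀ i j, ∃ z : ℤ, (m : ℚ) * Q i j = (z : ℚ)) → ℓ ≤ m

/-- **Lemma.** Suppose `Q` is a rational orthogonal matrix with `Q X Qᵀ = Y`, `Q ζ = η`, of
level `ℓ`, `p ∣ ℓ` and `rank_p(W_{X,ζ}) = n − 1`. Then there exists `t₀ ∈ ℤ` such that the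
characteristic polynomial `det(λI − X − t₀ζζᵀ)`, reduced mod `p`, has exactly one root in
`𝔽_p`. -/
theorem exists_t0_single_root
    {n : ℕ} (X Y : Matrix (Fin n) (Fin n) ℤ) (ζ η : Fin n → ℤ)
    (hXsymm : X.IsSymm) (hYsymm : Y.IsSymm)
    (Q : Matrix (Fin n) (Fin n) ℚ)
    (hQ : Qᵀ * Q = 1)
    (hQX : Q * X.map (Int.cast : ℤ → ℚ) * Qᵀ = Y.map (Int.cast : ℤ → ℚ))
    (hQζ : Q *ᵥ (fun i => (ζ i : ℚ)) = fun i => (η i : ℚ))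
    (ℓ : ℕ) (hℓ : IsLevel Q ℓ)
    (p : ℕ) (hp : p.Prime) [Fact p.Prime] (hpℓ : p ∣ ℓ)
    (hrank : ((walkMatrix X ζ).map (Int.cast : ℤ → ZMod p)).rank = n - 1) :
    ∃ t₀ : ℤ,
      ∃! lam₀ : ZMod p,
        ((X + t₀ • vecMulVec ζ ζ).charpoly.map (Int.castRingHom (ZMod p))).IsRoot lam₀ := by
  classical
  -- rule out n = 0 : in this case the level is 1, contradicting p ∣ ℓ
  rcases Nat.eq_zero_or_pos n with rfl | hn
  · exfalso
    obtain ⟨⟨hpos, -⟩, hmin⟩ := hℓ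
    have h1 : ℓ ≤ 1 := hmin 1 Nat.one_pos (fun i _ => i.elim0)
    have hone : ℓ = 1 := le_antisymm h1 hpos
    rw [hone, Nat.dvd_one] at hpℓ
    exact hp.ne_one hpℓ
  set A : Matrix (Fin n) (Fin n) (ZMod p) := X.map (Int.cast : ℤ → ZMod p) with hAdef
  set b : Fin n → ZMod p := fun i => ((ζ i : ZMod p)) with hbdef
  set W : Matrix (Fin n) (Fin n) (ZMod p) :=
    (walkMatrix X ζ).map (Int.cast : ℤ → ZMod p) with hWdef
  have hA : Aᵀ = A := by
    rw [hAdef, ← Matrix.transpose_map]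
    exact congrArg (Matrix.map · (Int.cast : ℤ → ZMod p)) hXsymm
  -- the columns of W
  have hApow : ∀ k : ℕ, A ^ k = (X ^ k).map (Int.cast : ℤ → ZMod p) := by
    intro k
    have : A = (Int.castRingHom (ZMod p)).mapMatrix X := rfl
    rw [this, ← map_pow]
    rfl
  have hWcol : ∀ i j : Fin n, W i j = ((A ^ (j : ℕ)) *ᵥ b) i := by
    intro i j
    rw [hWdef, hApow]
    simp only [Matrix.map_apply, walkMatrix, Matrix.of_apply, Matrix.mulVec, dotProduct,
      hbdef]
    push_cast
    rfl
  -- the kernel of Wᵀ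
  have hrankW : W.rank = n - 1 := hrank
  have hfinrank : Module.finrank (ZMod p) (LinearMap.ker (Wᵀ).mulVecLin) = 1 := by
    have h1 := LinearMap.finrank_range_add_finrank_ker (Wᵀ).mulVecLin
    have h2 : Module.finrank (ZMod p) (LinearMap.range (Wᵀ).mulVecLin) = n - 1 := by
      have : (Wᵀ).rank = n - 1 := by rw [Matrix.rank_transpose]; exact hrankW
      rw [← this]; rfl
    rw [h2, Module.finrank_pi] at h1
    simp only [Fintype.card_fin] at h1
    omega
  have hSne : LinearMap.ker (Wᵀ).mulVecLin ≠ ⊥ := by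
    intro hbot
    rw [hbot, finrank_bot] at hfinrank
    exact zero_ne_one hfinrank
  obtain ⟨v, hvS, hvne⟩ := Submodule.exists_mem_ne_zero_of_ne_bot hSne
  have hspan : Submodule.span (ZMod p) {v} = LinearMap.ker (Wᵀ).mulVecLin := by
    apply Submodule.eq_of_le_of_finrank_le
    · rw [Submodule.span_le, Set.singleton_subset_iff]; exact hvS
    · rw [finrank_span_singleton hvne, hfinrank]
  -- membership in the kernel
  have hmem : ∀ u : Fin n → ZMod p,
      u ∈ LinearMap.ker (Wᵀ).mulVecLin ↔ ∀ j : Fin n, u ⬝ᵥ ((A ^ (j : ℕ)) *ᵥ b) = 0 := by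
    intro u
    rw [LinearMap.mem_ker, Matrix.mulVecLin_apply, funext_iff]
    constructor
    · intro h j
      have := h j
      simp only [Matrix.mulVec, dotProduct, Matrix.transpose_apply, Pi.zero_apply] at this
      rw [dotProduct]
      calc ∑ k, u k * ((A ^ (j : ℕ)) *ᵥ b) k = ∑ k, W k j * u k := by
            refine Finset.sum_congr rfl fun k _ => ?_
            rw [hWcol k j, mul_comm]
        _ = 0 := this
    · intro h j
      have := h j
      simp only [Matrix.mulVec, dotProduct, Matrix.transpose_apply, Pi.zero_apply]
      rw [dotProduct] at this
      calc ∑ k, W k j * u k = ∑ k, u k * ((A ^ (j : ℕ)) *ᵥ b) k := by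
            refine Finset.sum_congr rfl fun k _ => ?_
            rw [hWcol k j, mul_comm]
        _ = 0 := this
  have hvcol : ∀ j : Fin n, v ⬝ᵥ ((A ^ (j : ℕ)) *ᵥ b) = 0 := (hmem v).mp hvS
  have hvb : ∀ f : Polynomial (ZMod p), v ⬝ᵥ ((Polynomial.aeval A f) *ᵥ b) = 0 :=
    fun f => dot_aeval_all hn A v b hvcol f
  -- A *ᵥ v is in the kernel, hence a multiple of v
  have hAvS : A *ᵥ v ∈ LinearMap.ker (Wᵀ).mulVecLin := by
    rw [hmem]
    intro j
    have h1 : (A *ᵥ v) ⬝ᵥ ((A ^ (j : ℕ)) *ᵥ b) = v ⬝ᵥ ((A ^ ((j : ℕ) + 1)) *ᵥ b) := by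
      rw [dotProduct_comm, Matrix.dotProduct_mulVec, ← Matrix.mulVec_transpose, hA,
        dotProduct_comm, pow_succ', ← Matrix.mulVec_mulVec]
    rw [h1]
    have := hvb (Polynomial.X ^ ((j : ℕ) + 1))
    rwa [Polynomial.aeval_X_pow] at this
  obtain ⟨μ, hμ⟩ := Submodule.mem_span_singleton.mp (hspan ▸ hAvS)
  have hAv : A *ᵥ v = μ • v := hμ.symm
  -- the kernel hypothesis
  have hker : ∀ u : Fin n → ZMod p,
      (∀ f : Polynomial (ZMod p), u ⬝ᵥ ((Polynomial.aeval A f) *ᵥ b) = 0) →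
        ∃ c : ZMod p, u = c • v := by
    intro u hu
    have huS : u ∈ LinearMap.ker (Wᵀ).mulVecLin := by
      rw [hmem]
      intro j
      have := hu (Polynomial.X ^ (j : ℕ))
      rwa [Polynomial.aeval_X_pow] at this
    obtain ⟨c, hc⟩ := Submodule.mem_span_singleton.mp (hspan ▸ huS)
    exact ⟨c, hc.symm⟩
  -- the range hypothesis
  have hrange : ∀ z : Fin n → ZMod p, v ⬝ᵥ z = 0 →
      ∃ f : Polynomial (ZMod p), z = (Polynomial.aeval A f) *ᵥ b := by
    set φ : (Fin n → ZMod p) →ₗ[ZMod p] ZMod p :=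
      { toFun := fun z => v ⬝ᵥ z
        map_add' := fun x y => dotProduct_add v x y
        map_smul' := fun c x => by
          simp [dotProduct_smul] } with hφdef
    have hφsurj : LinearMap.range φ = ⊤ := by
      rw [LinearMap.range_eq_top]
      intro c
      obtain ⟨i, hi⟩ := Function.ne_iff.mp hvne
      refine ⟨(c * (v i)⁻¹) • (Pi.single i 1 : Fin n → ZMod p), ?_⟩
      show v ⬝ᵥ ((c * (v i)⁻¹) • (Pi.single i 1 : Fin n → ZMod p)) = c
      have hi' : v i ≠ 0 := hi
      rw [dotProduct_smul, smul_eq_mul, dotProduct_single, mul_one]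
      field_simp
    have hφker : Module.finrank (ZMod p) (LinearMap.ker φ) = n - 1 := by
      have h1 := LinearMap.finrank_range_add_finrank_ker φ
      rw [hφsurj, Module.finrank_pi, finrank_top] at h1
      simp only [Fintype.card_fin, Module.finrank_self] at h1
      omega
    have hRle : LinearMap.range W.mulVecLin ≤ LinearMap.ker φ := by
      rintro z ⟨c, rfl⟩
      rw [LinearMap.mem_ker]
      show v ⬝ᵥ (W *ᵥ c) = 0
      rw [Matrix.dotProduct_mulVec]
      have hvW : v ᵥ* W = 0 := by
        funext j
        show ∑ k, v k * W k j = 0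
        calc ∑ k, v k * W k j = v ⬝ᵥ ((A ^ (j : ℕ)) *ᵥ b) := by
              rw [dotProduct]
              exact Finset.sum_congr rfl fun k _ => by rw [hWcol k j]
          _ = 0 := hvcol j
      rw [hvW, zero_dotProduct]
    have hReq : LinearMap.range W.mulVecLin = LinearMap.ker φ := by
      apply Submodule.eq_of_le_of_finrank_le hRle
      rw [hφker]
      show Module.finrank (ZMod p) (LinearMap.range W.mulVecLin) ≥ n - 1
      have : W.rank = n - 1 := hrankW
      rw [← this]
      exact le_of_eq rfl
    intro z hz
    have hzker : z ∈ LinearMap.ker φ := by rw [LinearMap.mem_ker]; exact hz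
    rw [← hReq] at hzker
    obtain ⟨c, hc⟩ := hzker
    refine ⟨∑ j : Fin n, Polynomial.C (c j) * Polynomial.X ^ (j : ℕ), ?_⟩
    rw [map_sum]
    have haev : ∀ j : Fin n,
        Polynomial.aeval A (Polynomial.C (c j) * Polynomial.X ^ (j : ℕ))
          = c j • A ^ (j : ℕ) := by
      intro j
      rw [_root_.map_mul, Polynomial.aeval_C, Polynomial.aeval_X_pow,
        Algebra.algebraMap_eq_smul_one, smul_mul_assoc, one_mul]
    calc z = W *ᵥ c := hc.symm
      _ = (∑ j : Fin n, Polynomial.aeval A (Polynomial.C (c j) * Polynomial.X ^ (j : ℕ))) *ᵥ b := by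
          rw [_root_.sum_mulVec]
          funext i
          rw [Finset.sum_apply]
          show (W *ᵥ c) i = _
          rw [Matrix.mulVec, dotProduct]
          refine Finset.sum_congr rfl fun j _ => ?_
          rw [haev j, Matrix.smul_mulVec, Pi.smul_apply, hWcol i j, smul_eq_mul, mul_comm]
  -- apply the key lemma
  obtain ⟨t, htiff⟩ := key A hA b v μ hvne hAv hvb hker hrange
  refine ⟨(t.val : ℤ), μ, ?_, ?_⟩
  · -- μ is a root
    have hmap : (X + (t.val : ℤ) • vecMulVec ζ ζ).map (Int.cast : ℤ → ZMod p)
        = A + t • vecMulVec b b := by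
      ext i j
      simp only [Matrix.map_apply, Matrix.add_apply, Matrix.smul_apply, Matrix.vecMulVec_apply,
        hAdef, hbdef, smul_eq_mul]
      push_cast
      simp [ZMod.natCast_val, ZMod.cast_id]
    show Polynomial.IsRoot _ μ
    rw [← Matrix.charpoly_map, show ⇑(Int.castRingHom (ZMod p)) = (Int.cast : ℤ → ZMod p) from rfl,
      hmap, Polynomial.IsRoot, eval_charpoly']
    exact (htiff μ).mpr rfl
  · intro lam hlam
    have hmap : (X + (t.val : ℤ) • vecMulVec ζ ζ).map (Int.cast : ℤ → ZMod p)
        = A + t • vecMulVec b b := by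
      ext i j
      simp only [Matrix.map_apply, Matrix.add_apply, Matrix.smul_apply, Matrix.vecMulVec_apply,
        hAdef, hbdef, smul_eq_mul]
      push_cast
      simp [ZMod.natCast_val, ZMod.cast_id]
    rw [← Matrix.charpoly_map, show ⇑(Int.castRingHom (ZMod p)) = (Int.cast : ℤ → ZMod p) from rfl,
      hmap, Polynomial.IsRoot, eval_charpoly'] at hlam
    exact (htiff lam).mp hlam
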